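/- Let δ, δ' ≥ 0 with δ + δ' ≤ c < 1 for a fixed constant c, let q ≥ 1 be an integer, and let F₁(n,s) = Π_{p | n}(1 + p^{−s}). Then for any positive integer r and all y ≥ 2: if δ = 0, Σ_{n ≤ y, gcd(n,q) = 1} μ²(n) n^{−(1−δ)} F₁(n, 1−δ')^r = O_{c,r}(log y); and if δ > 0, this sum is O_{c,r}(y^δ/δ). The implied constants depend only on c and r. -/

import Mathlib

open Finset

noncomputable section

/-- `F₁(n,s) = ∏_{p ∣ n} (1 + p^{-s})`. -/
def F1prod (n : ℕ) (s : ℝ) : ℝ := ∏ p ∈ n.primeFactors, (1 + (p : ℝ) ^ (-s))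

lemma aux_pow_le (r : ℕ) (x : ℝ) (hx0 : 0 ≤ x) (hx1 : x ≤ 1) :
    (1 + x) ^ r ≤ 1 + (3:ℝ) ^ r * x := by
  induction r with
  | zero => simpa using hx0
  | succ n ih =>
    have h3 : (1:ℝ) ≤ 3 ^ n := one_le_pow₀ (by norm_num)
    calc (1+x)^(n+1) = (1+x)^n * (1+x) := by ring
    _ ≤ (1 + 3^n * x) * (1+x) := by
        apply mul_le_mul_of_nonneg_right ih (by linarith)
    _ = 1 + (3^n + 1) * x + 3^n * x^2 := by ring
    _ ≤ 1 + (3:ℝ)^(n+1) * x := by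
        have hx2 : x^2 ≤ x := by nlinarith
        have h4 : (3:ℝ)^(n+1) = 3*3^n := by rw [pow_succ]; ring
        nlinarith [mul_le_mul_of_nonneg_left hx2 (le_trans zero_le_one h3)]

lemma aux_swap (N : ℕ) (g : ℕ → ℕ → ℝ) (hg : ∀ d m, 0 ≤ g d m) :
    ∑ n ∈ Icc 1 N, ∑ d ∈ n.divisors, g d (n / d) ≤
      ∑ d ∈ Icc 1 N, ∑ m ∈ Icc 1 N, g d m := by
  classical
  rw [Finset.sum_sigma' (Icc 1 N) (fun n => n.divisors) (fun n d => g d (n / d)),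
    ← Finset.sum_product' (f := fun d m => g d m)]
  set T := (Icc 1 N).sigma (fun n => n.divisors) with hT
  have hinj : Set.InjOn (fun p : Σ _ : ℕ, ℕ => (p.2, p.1 / p.2)) T := by
    rintro ⟨n, d⟩ hp ⟨n', d'⟩ hp' h
    simp only [Finset.mem_coe, hT, Finset.mem_sigma, Nat.mem_divisors] at hp hp'
    simp only [Prod.mk.injEq] at h
    obtain ⟨h1, h2⟩ := h
    subst h1
    have : n = n' := by rw [(Nat.mul_div_cancel' hp.2.1).symm, h2, Nat.mul_div_cancel' hp'.2.1]
    simp [this]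
  have := Finset.sum_image (f := fun q : ℕ × ℕ => g q.1 q.2)
      (g := fun p : Σ _ : ℕ, ℕ => (p.2, p.1 / p.2)) (s := T) (fun x hx y hy h => hinj hx hy h)
  calc ∑ p ∈ T, g p.2 (p.1 / p.2)
      = ∑ q ∈ T.image (fun p : Σ _ : ℕ, ℕ => (p.2, p.1 / p.2)), g q.1 q.2 := this.symm
    _ ≤ ∑ q ∈ Icc 1 N ×ˢ Icc 1 N, g q.1 q.2 := by
        apply Finset.sum_le_sum_of_subset_of_nonneg
        · intro q hq
          simp only [Finset.mem_image] at hq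
          obtain ⟨⟨n, d⟩, hp, rfl⟩ := hq
          simp only [hT, Finset.mem_sigma, Nat.mem_divisors, Finset.mem_Icc] at hp
          obtain ⟨⟨hn1, hnN⟩, hdn, hn0⟩ := hp
          have hd0 : 0 < d := Nat.pos_of_dvd_of_pos hdn hn1
          have hdN : d ≤ N := le_trans (Nat.le_of_dvd hn1 hdn) hnN
          have hq0 : 0 < n / d := Nat.div_pos (Nat.le_of_dvd hn1 hdn) hd0
          have hqN : n / d ≤ N := le_trans (Nat.div_le_self n d) hnN
          simp only [Finset.mem_product, Finset.mem_Icc]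
          exact ⟨⟨hd0, hdN⟩, ⟨hq0, hqN⟩⟩
        · intro q _ _
          exact hg q.1 q.2

lemma aux_point (r : ℕ) (δ' : ℝ) (hδ'0 : 0 ≤ δ') (hδ'1 : δ' ≤ 1)
    {n : ℕ} (hn : Squarefree n) :
    (F1prod n (1 - δ')) ^ r ≤
      ∑ d ∈ n.divisors, ((3:ℝ) ^ r) ^ d.primeFactors.card * (d:ℝ) ^ (δ' - 1) := by
  classical
  set K : ℝ := (3:ℝ) ^ r with hK
  have hK1 : (1:ℝ) ≤ K := one_le_pow₀ (by norm_num)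
  set h : ℕ → ℝ := fun d => K ^ d.primeFactors.card * (d:ℝ) ^ (δ' - 1) with hh
  have hh0 : ∀ d, 0 ≤ h d := fun d =>
    mul_nonneg (pow_nonneg (by linarith) _) (Real.rpow_nonneg (Nat.cast_nonneg d) _)
  have hn0 : n ≠ 0 := hn.ne_zero
  set P := n.primeFactors with hP
  have hxmem : ∀ p ∈ P, 0 ≤ (p:ℝ) ^ (δ' - 1) ∧ (p:ℝ) ^ (δ' - 1) ≤ 1 := by
    intro p hp
    have hp2 : 2 ≤ p := (Nat.prime_of_mem_primeFactors hp).two_le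
    constructor
    · exact Real.rpow_nonneg (Nat.cast_nonneg p) _
    · exact Real.rpow_le_one_of_one_le_of_nonpos
        (by exact_mod_cast le_trans (by norm_num) hp2) (by linarith)
  have step0 : F1prod n (1 - δ') = ∏ p ∈ P, (1 + (p:ℝ) ^ (δ' - 1)) := by
    unfold F1prod
    congr 1
    ext p
    rw [neg_sub]
  calc (F1prod n (1 - δ')) ^ r
      = ∏ p ∈ P, (1 + (p:ℝ) ^ (δ' - 1)) ^ r := by rw [step0, Finset.prod_pow]
    _ ≤ ∏ p ∈ P, (1 + K * (p:ℝ) ^ (δ' - 1)) := by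
        apply Finset.prod_le_prod
        · intro p hp
          exact pow_nonneg (by linarith [(hxmem p hp).1]) _
        · intro p hp
          exact aux_pow_le r _ (hxmem p hp).1 (hxmem p hp).2
    _ = ∑ t ∈ P.powerset, ∏ p ∈ t, (K * (p:ℝ) ^ (δ' - 1)) := by
        have : ∀ p ∈ P, (1 + K * (p:ℝ) ^ (δ' - 1)) = (K * (p:ℝ) ^ (δ' - 1) + 1) :=
          fun p _ => add_comm _ _
        rw [Finset.prod_congr rfl this, Finset.prod_add]
        refine Finset.sum_congr rfl fun t ht => ?_
        rw [Finset.prod_const_one, mul_one]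
    _ = ∑ t ∈ P.powerset, h (∏ p ∈ t, p) := by
        refine Finset.sum_congr rfl fun t ht => ?_
        have htP : t ⊆ P := Finset.mem_powerset.1 ht
        have hprimes : ∀ p ∈ t, p.Prime := fun p hp =>
          Nat.prime_of_mem_primeFactors (htP hp)
        have hpf : (∏ p ∈ t, p).primeFactors = t := Nat.primeFactors_prod hprimes
        rw [Finset.prod_mul_distrib, Finset.prod_const, hh]
        simp only [hpf]
        congr 1
        rw [Nat.cast_prod, ← Real.finset_prod_rpow t _ (fun p hp => Nat.cast_nonneg p) (δ' - 1)]
    _ = ∑ d ∈ P.powerset.image (fun t => ∏ p ∈ t, p), h d := by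
        rw [Finset.sum_image]
        intro t ht t' ht' hEq
        have hprimes : ∀ p ∈ t, p.Prime := fun p hp =>
          Nat.prime_of_mem_primeFactors (Finset.mem_powerset.1 ht hp)
        have hprimes' : ∀ p ∈ t', p.Prime := fun p hp =>
          Nat.prime_of_mem_primeFactors (Finset.mem_powerset.1 ht' hp)
        rw [← Nat.primeFactors_prod hprimes, ← Nat.primeFactors_prod hprimes', show (∏ p ∈ t, p) = ∏ p ∈ t', p from hEq]
    _ ≤ ∑ d ∈ n.divisors, h d := by
        apply Finset.sum_le_sum_of_subset_of_nonneg
        · intro d hd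
          simp only [Finset.mem_image] at hd
          obtain ⟨t, ht, rfl⟩ := hd
          have htP : t ⊆ P := Finset.mem_powerset.1 ht
          refine Nat.mem_divisors.2 ⟨?_, hn0⟩
          exact dvd_trans (Finset.prod_dvd_prod_of_subset _ _ _ htP)
            (Nat.prod_primeFactors_dvd n)
        · intro d _ _
          exact hh0 d

lemma aux_harm (N : ℕ) (hN : 1 ≤ N) :
    ∑ m ∈ Icc 1 N, (m:ℝ) ^ (-1:ℝ) ≤ 1 + Real.log N := by
  induction N, hN using Nat.le_induction with
  | base => norm_num
  | succ N hN ih =>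
    rw [Finset.sum_Icc_succ_top (by omega : 1 ≤ N + 1)]
    have hlog : Real.log N + ((N:ℝ)+1)⁻¹ ≤ Real.log (N+1) := by
      have hN0 : (0:ℝ) < N := by exact_mod_cast hN
      have h1 : Real.log ((N:ℝ)/(N+1)) ≤ (N:ℝ)/(N+1) - 1 :=
        Real.log_le_sub_one_of_pos (by positivity)
      rw [Real.log_div (ne_of_gt hN0) (by positivity)] at h1
      have : (N:ℝ)/(N+1) - 1 = -((N:ℝ)+1)⁻¹ := by field_simp; ring
      rw [this] at h1
      linarith
    have : ((N:ℕ)+1 : ℝ) ^ (-1:ℝ) = ((N:ℝ)+1)⁻¹ := by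
      rw [Real.rpow_neg_one]
    push_cast
    push_cast at ih
    rw [this]
    linarith

lemma aux_rsum (δ : ℝ) (hδ0 : 0 < δ) (hδ1 : δ ≤ 1) (N : ℕ) (hN : 1 ≤ N) :
    ∑ m ∈ Icc 1 N, (m:ℝ) ^ (δ - 1) ≤ 1 + ((N:ℝ) ^ δ - 1) / δ := by
  induction N, hN using Nat.le_induction with
  | base => norm_num
  | succ N hN ih =>
    rw [Finset.sum_Icc_succ_top (by omega : 1 ≤ N + 1)]
    have hN0 : (0:ℝ) < N := by exact_mod_cast hN
    have hN1 : (0:ℝ) < (N:ℝ) + 1 := by positivity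
    have key : ((N:ℝ)+1) ^ (δ - 1) ≤ (((N:ℝ)+1) ^ δ - (N:ℝ) ^ δ) / δ := by
      have hb : (1 + (-(((N:ℝ)+1)⁻¹))) ^ δ ≤ 1 + δ * (-(((N:ℝ)+1)⁻¹)) := by
        apply rpow_one_add_le_one_add_mul_self (by
          rw [neg_le, neg_neg]
          calc ((N:ℝ)+1)⁻¹ ≤ 1 := by
                rw [inv_le_one_iff₀]; right; linarith
          _ ≤ 1 := le_refl 1) (le_of_lt hδ0) hδ1
      have hq : 1 + (-(((N:ℝ)+1)⁻¹)) = (N:ℝ)/((N:ℝ)+1) := by field_simp; ring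
      rw [hq] at hb
      have hdiv : ((N:ℝ)/((N:ℝ)+1)) ^ δ = (N:ℝ)^δ / ((N:ℝ)+1)^δ :=
        Real.div_rpow (le_of_lt hN0) (le_of_lt hN1) δ
      rw [hdiv] at hb
      have hpow : ((N:ℝ)+1) ^ (δ-1) = ((N:ℝ)+1)^δ * (((N:ℝ)+1))⁻¹ := by
        rw [show δ - 1 = δ + (-1) by ring, Real.rpow_add hN1, Real.rpow_neg_one]
      have hP : (0:ℝ) < ((N:ℝ)+1)^δ := Real.rpow_pos_of_pos hN1 δ
      rw [div_le_iff₀ hP] at hb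
      rw [le_div_iff₀ hδ0]
      rw [hpow]
      nlinarith
    have hstep : ((N:ℕ)+1 : ℝ) ^ (δ-1) ≤ ((((N:ℝ)+1)) ^ δ - (N:ℝ) ^ δ) / δ := by
      push_cast; exact key
    push_cast at ih
    have : (((N:ℝ)+1) ^ δ - 1) / δ = ((N:ℝ)^δ - 1)/δ + ((((N:ℝ)+1))^δ - (N:ℝ)^δ)/δ := by
      ring
    push_cast
    linarith

lemma aux_dsum (c : ℝ) (hc : c < 1) (r : ℕ) :
    ∃ C : ℝ, 0 < C ∧ ∀ s : ℝ, s ≤ c - 2 → ∀ N : ℕ,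
      ∑ d ∈ Icc 1 N, ((3:ℝ) ^ r) ^ d.primeFactors.card * (d:ℝ) ^ s ≤ C := by
  classical
  set K : ℝ := (3:ℝ) ^ r with hKdef
  have hK1 : (1:ℝ) ≤ K := one_le_pow₀ (by norm_num)
  have hK0 : (0:ℝ) < K := by linarith
  have hε0 : 0 < (1 - c)/2 := by linarith
  set ε : ℝ := (1 - c)/2 with hε
  set P : ℕ := ⌈K ^ (1/ε)⌉₊ with hP
  have hsummable : Summable (fun n : ℕ => (n:ℝ) ^ ((c-3)/2)) :=
    Real.summable_nat_rpow.2 (by linarith)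
  set T : ℝ := ∑' n : ℕ, (n:ℝ) ^ ((c-3)/2) with hT
  have hTnn : 0 ≤ T := tsum_nonneg fun n => Real.rpow_nonneg (Nat.cast_nonneg n) _
  refine ⟨K ^ P * T + 1, by positivity, ?_⟩
  intro s hs N
  have key : ∀ d : ℕ, 1 ≤ d → K ^ d.primeFactors.card ≤ K ^ P * (d:ℝ) ^ ε := by
    intro d hd
    have h1 : K ^ d.primeFactors.card = ∏ _p ∈ d.primeFactors, K := by
      rw [Finset.prod_const]
    rw [h1, ← Finset.prod_filter_mul_prod_filter_not d.primeFactors (fun p => p ≤ P)]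
    have hsmall : ∏ _p ∈ d.primeFactors.filter (fun p => p ≤ P), K ≤ K ^ P := by
      rw [Finset.prod_const]
      apply pow_le_pow_right₀ hK1
      calc (d.primeFactors.filter (fun p => p ≤ P)).card
          ≤ (Icc 1 P).card := by
            apply Finset.card_le_card
            intro p hp
            simp only [Finset.mem_filter] at hp
            have := (Nat.prime_of_mem_primeFactors hp.1).two_le
            simp only [Finset.mem_Icc]
            omega
        _ = P := by rw [Nat.card_Icc]; omega
    have hbig : ∏ _p ∈ d.primeFactors.filter (fun p => ¬ p ≤ P), K ≤ (d:ℝ) ^ ε := by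
      have step1 : ∏ _p ∈ d.primeFactors.filter (fun p => ¬ p ≤ P), K
          ≤ ∏ p ∈ d.primeFactors.filter (fun p => ¬ p ≤ P), (p:ℝ) ^ ε := by
        apply Finset.prod_le_prod (fun _ _ => le_of_lt hK0)
        intro p hp
        simp only [Finset.mem_filter, not_le] at hp
        have hpgt : K ^ (1/ε) < (p:ℝ) := by
          calc K ^ (1/ε) ≤ (P:ℝ) := Nat.le_ceil _
          _ < (p:ℝ) := by exact_mod_cast hp.2
        have h2 : (K ^ (1/ε)) ^ ε ≤ (p:ℝ) ^ ε :=
          Real.rpow_le_rpow (Real.rpow_nonneg (le_of_lt hK0) _) (le_of_lt hpgt) (le_of_lt hε0)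
        have h3 : (K ^ (1/ε) : ℝ) ^ ε = K := by
          rw [← Real.rpow_mul (le_of_lt hK0), one_div_mul_cancel (ne_of_gt hε0), Real.rpow_one]
        rwa [h3] at h2
      have step2 : ∏ p ∈ d.primeFactors.filter (fun p => ¬ p ≤ P), (p:ℝ) ^ ε
          ≤ ∏ p ∈ d.primeFactors, (p:ℝ) ^ ε := by
        rw [← Finset.prod_filter_mul_prod_filter_not d.primeFactors (fun p => p ≤ P)
          (fun p => (p:ℝ) ^ ε)]
        have hone : (1:ℝ) ≤ ∏ p ∈ d.primeFactors.filter (fun p => p ≤ P), (p:ℝ) ^ ε := by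
          rw [← Finset.prod_const_one (s := d.primeFactors.filter (fun p => p ≤ P))]
          apply Finset.prod_le_prod (fun _ _ => zero_le_one)
          intro p hp
          apply Real.one_le_rpow _ (le_of_lt hε0)
          have := (Nat.prime_of_mem_primeFactors (Finset.mem_filter.1 hp).1).two_le
          exact_mod_cast le_trans (by norm_num) this
        have hnn : (0:ℝ) ≤ ∏ p ∈ d.primeFactors.filter (fun p => ¬ p ≤ P), (p:ℝ) ^ ε :=
          Finset.prod_nonneg fun p _ => Real.rpow_nonneg (Nat.cast_nonneg p) _
        exact le_mul_of_one_le_left hnn hone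
      have step3 : ∏ p ∈ d.primeFactors, (p:ℝ) ^ ε ≤ (d:ℝ) ^ ε := by
        rw [Real.finset_prod_rpow _ _ (fun p _ => Nat.cast_nonneg p), ← Nat.cast_prod]
        apply Real.rpow_le_rpow (Nat.cast_nonneg _) _ (le_of_lt hε0)
        exact_mod_cast Nat.le_of_dvd (by omega) (Nat.prod_primeFactors_dvd d)
      exact le_trans step1 (le_trans step2 step3)
    exact mul_le_mul hsmall hbig (Finset.prod_nonneg fun _ _ => le_of_lt hK0) (by positivity)
  calc ∑ d ∈ Icc 1 N, K ^ d.primeFactors.card * (d:ℝ) ^ s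
      ≤ ∑ d ∈ Icc 1 N, K ^ P * (d:ℝ) ^ ((c-3)/2) := by
        apply Finset.sum_le_sum
        intro d hd
        have hd1 : 1 ≤ d := (Finset.mem_Icc.1 hd).1
        have hd1' : (1:ℝ) ≤ (d:ℝ) := by exact_mod_cast hd1
        calc K ^ d.primeFactors.card * (d:ℝ) ^ s
            ≤ (K ^ P * (d:ℝ) ^ ε) * (d:ℝ) ^ s :=
              mul_le_mul_of_nonneg_right (key d hd1)
                (Real.rpow_nonneg (Nat.cast_nonneg d) _)
          _ = K ^ P * (d:ℝ) ^ (ε + s) := by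
              rw [Real.rpow_add (by linarith : (0:ℝ) < d), mul_assoc]
          _ ≤ K ^ P * (d:ℝ) ^ ((c-3)/2) := by
              apply mul_le_mul_of_nonneg_left _ (by positivity)
              apply Real.rpow_le_rpow_of_exponent_le hd1'
              rw [hε]; linarith
    _ = K ^ P * ∑ d ∈ Icc 1 N, (d:ℝ) ^ ((c-3)/2) := by rw [Finset.mul_sum]
    _ ≤ K ^ P * T := by
        apply mul_le_mul_of_nonneg_left _ (by positivity)
        exact Summable.sum_le_tsum (Icc 1 N) (fun n _ => Real.rpow_nonneg (Nat.cast_nonneg n) _) hsummable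
    _ ≤ K ^ P * T + 1 := by linarith

/-- **Lemma 5.3**: for `δ, δ' ≥ 0` with `δ + δ' ≤ c < 1` and any positive integer `r`,
`∑_{n ≤ y, (n,q)=1} μ²(n) n^{-(1-δ)} F₁(n,1-δ')^r` is `O_{c,r}(log y)` if `δ = 0`, and
`O_{c,r}(y^δ/δ)` if `δ > 0`. -/
theorem lemma_five_three (c : ℝ) (hc : c < 1) (r : ℕ) (hr : 0 < r) :
    ∃ D : ℝ, 0 < D ∧ ∀ δ δ' : ℝ, 0 ≤ δ → 0 ≤ δ' → δ + δ' ≤ c →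
      ∀ q : ℕ, 1 ≤ q → ∀ y : ℝ, 2 ≤ y →
        (δ = 0 →
          ∑ n ∈ (Finset.Icc 1 ⌊y⌋₊).filter (fun n : ℕ => Nat.Coprime n q),
            (ArithmeticFunction.moebius n : ℝ) ^ 2 * (n : ℝ) ^ (-(1 - δ)) *
              (F1prod n (1 - δ')) ^ r ≤ D * Real.log y) ∧
        (0 < δ →
          ∑ n ∈ (Finset.Icc 1 ⌊y⌋₊).filter (fun n : ℕ => Nat.Coprime n q),
            (ArithmeticFunction.moebius n : ℝ) ^ 2 * (n : ℝ) ^ (-(1 - δ)) *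
              (F1prod n (1 - δ')) ^ r ≤ D * y ^ δ / δ) := by
  classical
  obtain ⟨C, hC0, hC⟩ := aux_dsum c hc r
  refine ⟨3 * (C + 1), by positivity, ?_⟩
  intro δ δ' hδ0 hδ'0 hδδ' q hq y hy
  set K : ℝ := (3:ℝ) ^ r with hKdef
  have hK1 : (1:ℝ) ≤ K := one_le_pow₀ (by norm_num)
  set N : ℕ := ⌊y⌋₊ with hN
  have hy0 : (0:ℝ) ≤ y := by linarith
  have hN2 : 2 ≤ N := Nat.le_floor (by exact_mod_cast hy)
  have hNy : (N:ℝ) ≤ y := Nat.floor_le hy0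
  have hδc : δ ≤ c := by linarith
  have hδ'c : δ' ≤ c := by linarith
  have hδ1 : δ ≤ 1 := by linarith
  have hδ'1 : δ' ≤ 1 := by linarith
  -- nonnegativity of F1prod and the summand
  have hF1nn : ∀ n : ℕ, 0 ≤ F1prod n (1 - δ') := by
    intro n
    apply Finset.prod_nonneg
    intro p hp
    have : 0 ≤ (p:ℝ) ^ (-(1-δ')) := Real.rpow_nonneg (Nat.cast_nonneg p) _
    linarith
  set term : ℕ → ℝ := fun n =>
    (ArithmeticFunction.moebius n : ℝ) ^ 2 * (n : ℝ) ^ (-(1 - δ)) *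
      (F1prod n (1 - δ')) ^ r with hterm
  have htermnn : ∀ n, 0 ≤ term n := by
    intro n
    apply mul_nonneg (mul_nonneg (sq_nonneg _) (Real.rpow_nonneg (Nat.cast_nonneg n) _))
    exact pow_nonneg (hF1nn n) r
  set g : ℕ → ℕ → ℝ := fun d m =>
    (K ^ d.primeFactors.card * (d:ℝ) ^ (δ + δ' - 2)) * (m:ℝ) ^ (δ - 1) with hg
  have hgnn : ∀ d m, 0 ≤ g d m := by
    intro d m
    apply mul_nonneg (mul_nonneg (pow_nonneg (by linarith) _)
      (Real.rpow_nonneg (Nat.cast_nonneg d) _)) (Real.rpow_nonneg (Nat.cast_nonneg m) _)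
  -- pointwise bound
  have hpoint : ∀ n ∈ Icc 1 N, term n ≤ ∑ d ∈ n.divisors, g d (n / d) := by
    intro n hn
    have hn1 : 1 ≤ n := (Finset.mem_Icc.1 hn).1
    have hn0 : n ≠ 0 := by omega
    have hnpos : (0:ℝ) < n := by exact_mod_cast hn1
    by_cases hsq : Squarefree n
    · -- μ² = 1
      have hμ : (ArithmeticFunction.moebius n : ℝ) ^ 2 = 1 := by
        rw [ArithmeticFunction.moebius_apply_of_squarefree hsq]
        push_cast
        rw [← pow_mul, mul_comm, pow_mul, neg_one_sq, one_pow]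
      have h1 : term n = (n : ℝ) ^ (δ - 1) * (F1prod n (1 - δ')) ^ r := by
        rw [hterm]
        simp only [hμ, one_mul, neg_sub]
      have h2 : (F1prod n (1 - δ')) ^ r ≤
          ∑ d ∈ n.divisors, K ^ d.primeFactors.card * (d:ℝ) ^ (δ' - 1) :=
        aux_point r δ' hδ'0 hδ'1 hsq
      calc term n ≤ (n : ℝ) ^ (δ - 1) *
            ∑ d ∈ n.divisors, K ^ d.primeFactors.card * (d:ℝ) ^ (δ' - 1) := by
            rw [h1]
            exact mul_le_mul_of_nonneg_left h2 (Real.rpow_nonneg (le_of_lt hnpos) _)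
        _ = ∑ d ∈ n.divisors, g d (n / d) := by
            rw [Finset.mul_sum]
            refine Finset.sum_congr rfl fun d hd => ?_
            obtain ⟨hdvd, -⟩ := Nat.mem_divisors.1 hd
            have hd1 : 1 ≤ d := Nat.pos_of_dvd_of_pos hdvd hn1
            have hdpos : (0:ℝ) < d := by exact_mod_cast hd1
            have hm1 : 1 ≤ n / d := Nat.div_pos (Nat.le_of_dvd hn1 hdvd) hd1
            have hmpos : (0:ℝ) < (n / d : ℕ) := by exact_mod_cast hm1
            have hcast : (n:ℝ) = (d:ℝ) * ((n / d : ℕ):ℝ) := by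
              rw [← Nat.cast_mul, Nat.mul_div_cancel' hdvd]
            have hgd : g d (n / d) =
                K ^ d.primeFactors.card * (d:ℝ) ^ (δ + δ' - 2) * ((n / d : ℕ):ℝ) ^ (δ - 1) := rfl
            rw [hgd, hcast, Real.mul_rpow (le_of_lt hdpos) (le_of_lt hmpos),
              show δ + δ' - 2 = (δ' - 1) + (δ - 1) by ring, Real.rpow_add hdpos]
            ring
    · -- μ = 0
      have hμ : ArithmeticFunction.moebius n = 0 :=
        ArithmeticFunction.moebius_eq_zero_of_not_squarefree hsq
      have : term n = 0 := by
        rw [hterm]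
        simp [hμ]
      rw [this]
      exact Finset.sum_nonneg fun d _ => hgnn d (n / d)
  -- main chain up to the product of the two sums
  have hmain : ∑ n ∈ (Finset.Icc 1 N).filter (fun n : ℕ => Nat.Coprime n q), term n ≤
      C * ∑ m ∈ Icc 1 N, (m:ℝ) ^ (δ - 1) := by
    have hMnn : 0 ≤ ∑ m ∈ Icc 1 N, (m:ℝ) ^ (δ - 1) :=
      Finset.sum_nonneg fun m _ => Real.rpow_nonneg (Nat.cast_nonneg m) _
    calc ∑ n ∈ (Finset.Icc 1 N).filter (fun n : ℕ => Nat.Coprime n q), term n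
        ≤ ∑ n ∈ Icc 1 N, term n := by
          apply Finset.sum_le_sum_of_subset_of_nonneg (Finset.filter_subset _ _)
          intro n _ _
          exact htermnn n
      _ ≤ ∑ n ∈ Icc 1 N, ∑ d ∈ n.divisors, g d (n / d) := Finset.sum_le_sum hpoint
      _ ≤ ∑ d ∈ Icc 1 N, ∑ m ∈ Icc 1 N, g d m := aux_swap N g hgnn
      _ = (∑ d ∈ Icc 1 N, K ^ d.primeFactors.card * (d:ℝ) ^ (δ + δ' - 2)) *
            ∑ m ∈ Icc 1 N, (m:ℝ) ^ (δ - 1) := by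
          rw [Finset.sum_mul_sum]
      _ ≤ C * ∑ m ∈ Icc 1 N, (m:ℝ) ^ (δ - 1) := by
          apply mul_le_mul_of_nonneg_right _ hMnn
          exact hC (δ + δ' - 2) (by linarith) N
  have hlogy : (1:ℝ)/2 ≤ Real.log y := by
    have h2 : Real.log 2 ≤ Real.log y := Real.log_le_log (by norm_num) hy
    nlinarith [Real.log_two_gt_d9]
  constructor
  · -- δ = 0 case
    intro hδeq
    subst hδeq
    have hM : ∑ m ∈ Icc 1 N, (m:ℝ) ^ ((0:ℝ) - 1) ≤ 1 + Real.log N := by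
      have := aux_harm N (by omega)
      convert this using 2
      norm_num
    have hlogN : Real.log N ≤ Real.log y := by
      apply Real.log_le_log (by exact_mod_cast (by omega : 0 < N)) hNy
    have hM2 : ∑ m ∈ Icc 1 N, (m:ℝ) ^ ((0:ℝ) - 1) ≤ 3 * Real.log y := by
      calc ∑ m ∈ Icc 1 N, (m:ℝ) ^ ((0:ℝ) - 1) ≤ 1 + Real.log N := hM
      _ ≤ 3 * Real.log y := by linarith
    calc ∑ n ∈ (Finset.Icc 1 N).filter (fun n : ℕ => Nat.Coprime n q), term n
        ≤ C * ∑ m ∈ Icc 1 N, (m:ℝ) ^ ((0:ℝ) - 1) := hmain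
      _ ≤ C * (3 * Real.log y) := by
          apply mul_le_mul_of_nonneg_left hM2 (le_of_lt hC0)
      _ ≤ 3 * (C + 1) * Real.log y := by nlinarith
  · -- δ > 0 case
    intro hδpos
    have hM : ∑ m ∈ Icc 1 N, (m:ℝ) ^ (δ - 1) ≤ 1 + ((N:ℝ) ^ δ - 1) / δ :=
      aux_rsum δ hδpos hδ1 N (by omega)
    have hNyδ : (N:ℝ) ^ δ ≤ y ^ δ :=
      Real.rpow_le_rpow (Nat.cast_nonneg N) hNy (le_of_lt hδpos)
    have hyδ1 : (1:ℝ) ≤ y ^ δ :=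
      Real.one_le_rpow (by linarith) (le_of_lt hδpos)
    have hM2 : ∑ m ∈ Icc 1 N, (m:ℝ) ^ (δ - 1) ≤ 2 * y ^ δ / δ := by
      have h1 : 1 + ((N:ℝ) ^ δ - 1) / δ ≤ 1 + (y ^ δ - 1) / δ := by
        gcongr
      have h2 : 1 + (y ^ δ - 1) / δ ≤ 2 * y ^ δ / δ := by
        have heq : 1 + (y ^ δ - 1) / δ = (δ + (y ^ δ - 1)) / δ := by field_simp
        rw [heq, div_le_div_iff₀ hδpos hδpos]
        nlinarith
      linarith
    calc ∑ n ∈ (Finset.Icc 1 N).filter (fun n : ℕ => Nat.Coprime n q), term n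
        ≤ C * ∑ m ∈ Icc 1 N, (m:ℝ) ^ (δ - 1) := hmain
      _ ≤ C * (2 * y ^ δ / δ) := by
          apply mul_le_mul_of_nonneg_left hM2 (le_of_lt hC0)
      _ ≤ 3 * (C + 1) * y ^ δ / δ := by
          rw [mul_div_assoc, mul_div_assoc]
          have hpos : 0 ≤ y ^ δ / δ := div_nonneg (by linarith) (le_of_lt hδpos)
          nlinarith

end
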